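/- Weak-majorization norm characterization with integral average: Let C, D_τ (τ ∈ Ω, a σ-compact metric space with probability measure ν) be symmetric T-product tensors in R^{m×m×p} with uniformly bounded norms and τ ↦ D_τ continuous. Then the eigenvalue vector λ⃗(C) is weakly majorized by ∫_Ω λ⃗(D_τ) dν(τ) (entrywise integral of ordered eigenvalue vectors) if and only if for every nondecreasing convex function f: R → [0,∞) and every unitarily invariant norm ‖·‖_ρ one has ‖f(C)‖_ρ ≤ ∫_Ω ‖f(D_τ)‖_ρ dν(τ). -/

import Mathlib

open scoped BigOperators
open MeasureTheory

/-- A symmetric gauge function on `ℝ^N` (corresponding via von Neumann's theorem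
to a unitarily invariant norm `‖H‖_ρ = ρ(λ⃗(|H|))`). -/
structure SymmGauge (N : ℕ) where
  toFun : (Fin N → ℝ) → ℝ
  nonneg : ∀ x, 0 ≤ toFun x
  triangle : ∀ x y, toFun (x + y) ≤ toFun x + toFun y
  homog : ∀ (c : ℝ) (x), toFun (c • x) = |c| * toFun x
  pos_of_ne_zero : ∀ x, x ≠ 0 → 0 < toFun x
  perm_invariant : ∀ (σ : Equiv.Perm (Fin N)) (x), toFun (x ∘ σ) = toFun x
  abs_invariant : ∀ x, toFun (fun i => |x i|) = toFun x

/-- Partial sum of the first `k` entries. -/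
def pSum {N : ℕ} (x : Fin N → ℝ) (k : ℕ) : ℝ :=
  ∑ i ∈ Finset.univ.filter (fun i : Fin N => (i : ℕ) < k), x i

namespace WMaux

variable {N : ℕ}

/-- Extension of a `Fin N`-vector to `ℕ` by zero. -/
def ext (x : Fin N → ℝ) (n : ℕ) : ℝ := if h : n < N then x ⟨n, h⟩ else 0

lemma pSum_eq_range (x : Fin N → ℝ) (k : ℕ) :
    pSum x k = ∑ i ∈ Finset.range k, ext x i := by
  induction k with
  | zero => simp [pSum]
  | succ k ih =>
    rw [Finset.sum_range_succ, ← ih]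
    unfold pSum
    by_cases hk : k < N
    · have h : Finset.univ.filter (fun i : Fin N => (i:ℕ) < k+1)
          = insert (⟨k, hk⟩ : Fin N) (Finset.univ.filter (fun i : Fin N => (i:ℕ) < k)) := by
        ext i
        simp only [Finset.mem_filter, Finset.mem_univ, true_and, Finset.mem_insert,
          Nat.lt_succ_iff_lt_or_eq, Fin.ext_iff]
        tauto
      rw [h, Finset.sum_insert (by simp), ext, dif_pos hk]
      ring
    · have h : Finset.univ.filter (fun i : Fin N => (i:ℕ) < k+1)
          = Finset.univ.filter (fun i : Fin N => (i:ℕ) < k) := by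
        ext i
        simp only [Finset.mem_filter, Finset.mem_univ, true_and]
        constructor
        · intro h'
          rcases Nat.lt_succ_iff_lt_or_eq.1 h' with h' | h'
          · exact h'
          · exact absurd (h' ▸ i.isLt) hk
        · exact fun h' => Nat.lt_succ_of_lt h'
      rw [h, ext, dif_neg hk]
      ring

lemma sum_univ_eq_range (x : Fin N → ℝ) :
    ∑ i, x i = ∑ n ∈ Finset.range N, ext x n := by
  rw [← pSum_eq_range]
  unfold pSum
  congr 1
  ext i
  simp [i.isLt]

lemma abel_aux (t d : ℕ → ℝ) (ht : Antitone t)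
    (hS : ∀ n, ∑ i ∈ Finset.range n, d i ≤ 0) :
    ∀ n, ∑ i ∈ Finset.range n, t i * d i ≤ t n * ∑ i ∈ Finset.range n, d i := by
  intro n
  induction n with
  | zero => simp
  | succ n ih =>
    rw [Finset.sum_range_succ, Finset.sum_range_succ]
    have h1 : ∑ i ∈ Finset.range n, t i * d i + t n * d n
        ≤ t n * (∑ i ∈ Finset.range n, d i + d n) := by
      rw [mul_add]; linarith
    refine h1.trans ?_
    exact mul_le_mul_of_nonpos_right (ht (Nat.le_succ n))
      (by simpa [Finset.sum_range_succ] using hS (n+1))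

lemma abel_nonpos (t d : ℕ → ℝ) (ht : Antitone t) (ht0 : ∀ n, 0 ≤ t n)
    (hS : ∀ n, ∑ i ∈ Finset.range n, d i ≤ 0) (n : ℕ) :
    ∑ i ∈ Finset.range n, t i * d i ≤ 0 :=
  (abel_aux t d ht hS n).trans (mul_nonpos_of_nonneg_of_nonpos (ht0 n) (hS n))



variable {f : ℝ → ℝ}

/-- The "right derivative" of a convex function, as an infimum of slopes. -/
noncomputable def rd (f : ℝ → ℝ) (c : ℝ) : ℝ :=
  sInf ((fun x => slope f c x) '' Set.Ioi c)

/-- Divided difference, with right-derivative convention on the diagonal. -/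
noncomputable def tpair (f : ℝ → ℝ) (u v : ℝ) : ℝ :=
  if u = v then rd f u else slope f u v

lemma slope_nonneg (hm : Monotone f) {u v : ℝ} (h : u ≠ v) : 0 ≤ slope f u v := by
  rcases lt_or_gt_of_ne h with h' | h'
  · rw [slope_def_field]
    exact div_nonneg (by linarith [hm h'.le]) (by linarith)
  · rw [slope_comm, slope_def_field]
    exact div_nonneg (by linarith [hm h'.le]) (by linarith)

lemma rd_bddBelow (hm : Monotone f) (c : ℝ) :
    BddBelow ((fun x => slope f c x) '' Set.Ioi c) := by
  refine ⟨0, ?_⟩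
  rintro y ⟨x, hx, rfl⟩
  exact slope_nonneg hm (ne_of_lt hx)

lemma rd_le_slope (hm : Monotone f) {c x : ℝ} (hx : c < x) : rd f c ≤ slope f c x :=
  csInf_le (rd_bddBelow hm c) ⟨x, hx, rfl⟩

lemma le_rd {r c : ℝ} (h : ∀ x, c < x → r ≤ slope f c x) : r ≤ rd f c :=
  le_csInf ⟨slope f c (c+1), ⟨c+1, by simp, rfl⟩⟩ (by rintro y ⟨x, hx, rfl⟩; exact h x hx)

lemma rd_nonneg (hm : Monotone f) (c : ℝ) : 0 ≤ rd f c :=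
  le_rd fun x hx => slope_nonneg hm (ne_of_lt hx)

/-- Monotonicity of secants of a convex function, in terms of `slope`. -/
lemma slope_sec_mono (hf : ConvexOn ℝ Set.univ f) {a x y : ℝ}
    (hxa : x ≠ a) (hya : y ≠ a) (hxy : x ≤ y) : slope f a x ≤ slope f a y := by
  have := hf.secant_mono (Set.mem_univ a) (Set.mem_univ x) (Set.mem_univ y) hxa hya hxy
  rw [slope_def_field, slope_def_field]
  exact this

lemma tpair_nonneg (hm : Monotone f) (u v : ℝ) : 0 ≤ tpair f u v := by
  unfold tpair
  split
  · exact rd_nonneg hm u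
  · exact slope_nonneg hm (by assumption)

lemma tpair_ineq (u v : ℝ) : f u - f v ≤ tpair f u v * (u - v) := by
  unfold tpair
  split
  · rename_i h; rw [h]; simp
  · rename_i h
    have hvu : v - u ≠ 0 := fun h' => h (by linarith [sub_eq_zero.1 h'])
    have h4 : (u - v) = -(v - u) := by ring
    rw [slope_def_field, h4, mul_neg, div_mul_cancel₀ _ hvu]
    exact le_of_eq (by ring)

lemma slope_eq_minmax {u v : ℝ} : slope f u v = slope f (min u v) (max u v) := by
  rcases le_total u v with h | h
  · rw [min_eq_left h, max_eq_right h]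
  · rw [min_eq_right h, max_eq_left h, slope_comm]

/-- Key monotonicity: `tpair` is monotone with respect to the componentwise order on pairs. -/
lemma tpair_mono (hf : ConvexOn ℝ Set.univ f) (hm : Monotone f) {u v u' v' : ℝ}
    (hu : u' ≤ u) (hv : v' ≤ v) : tpair f u' v' ≤ tpair f u v := by
  unfold tpair
  by_cases h1 : u = v <;> by_cases h2 : u' = v'
  · -- both diagonal: rd f u' ≤ rd f u  with u' ≤ u
    rw [if_pos h1, if_pos h2]
    refine le_rd fun x hx => ?_
    rcases eq_or_lt_of_le (hu.trans hx.le : u' ≤ x) with h | h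
    · exact absurd h (ne_of_lt (lt_of_le_of_lt hu hx))
    calc rd f u' ≤ slope f u' x := rd_le_slope hm h
    _ = slope f x u' := slope_comm f u' x
    _ ≤ slope f x u := slope_sec_mono hf (ne_of_lt h) (ne_of_lt hx) hu
    _ = slope f u x := slope_comm f x u
  · -- u = v = c diagonal, (u', v') distinct with both ≤ c
    rw [if_pos h1, if_neg h2]
    set c := u with hc
    set m := min u' v'
    set M := max u' v'
    have hlt : m < M := min_lt_max.2 h2
    have hMc : M ≤ c := max_le hu (h1 ▸ hv)
    rw [slope_eq_minmax (f := f) (u := u') (v := v')]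
    refine le_rd fun x hx => ?_
    have hmx : m < x := lt_of_lt_of_le hlt (hMc.trans hx.le)
    calc slope f m M ≤ slope f m x :=
          slope_sec_mono hf hlt.ne' (ne_of_gt hmx) (hMc.trans hx.le)
    _ = slope f x m := slope_comm f m x
    _ ≤ slope f x c := slope_sec_mono hf (ne_of_lt hmx) (ne_of_lt hx)
          ((min_le_left _ _).trans hu)
    _ = slope f c x := slope_comm f x c
  · -- (u,v) distinct, u' = v' = c'
    rw [if_neg h1, if_pos h2]
    set c' := u' with hc'
    set m := min u v
    set M := max u v
    have hlt : m < M := min_lt_max.2 h1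
    have hcm : c' ≤ m := le_min hu (h2 ▸ hv)
    rw [slope_eq_minmax (f := f) (u := u) (v := v)]
    have hcM : c' < M := lt_of_le_of_lt hcm hlt
    calc rd f c' ≤ slope f c' M := rd_le_slope hm hcM
    _ = slope f M c' := slope_comm f c' M
    _ ≤ slope f M m := slope_sec_mono hf (ne_of_lt hcM) hlt.ne hcm
    _ = slope f m M := slope_comm f M m
  · -- both distinct
    rw [if_neg h1, if_neg h2]
    rw [slope_eq_minmax (f := f) (u := u) (v := v),
      slope_eq_minmax (f := f) (u := u') (v := v')]
    set m := min u v
    set M := max u v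
    set m' := min u' v'
    set M' := max u' v'
    have hlt : m < M := min_lt_max.2 h1
    have hlt' : m' < M' := min_lt_max.2 h2
    have hmm : m' ≤ m := min_le_min hu hv
    have hMM : M' ≤ M := max_le_max hu hv
    have hm'M : m' < M := lt_of_lt_of_le hlt' hMM
    calc slope f m' M' ≤ slope f m' M :=
          slope_sec_mono hf hlt'.ne' hm'M.ne' hMM
    _ = slope f M m' := slope_comm f m' M
    _ ≤ slope f M m := slope_sec_mono hf hm'M.ne hlt.ne hmm
    _ = slope f m M := slope_comm f M m



/-- Hardy–Littlewood–Pólya: monotone convex functions preserve weak majorization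
of antitone vectors. -/
lemma pSum_comp_le {N : ℕ} {f : ℝ → ℝ} (hf : ConvexOn ℝ Set.univ f) (hm : Monotone f)
    (a y : Fin N → ℝ) (ha : Antitone a) (hy : Antitone y)
    (h : ∀ k, pSum a k ≤ pSum y k) (k : ℕ) :
    pSum (fun i => f (a i)) k ≤ pSum (fun i => f (y i)) k := by
  set T : ℕ → ℝ := fun n => if h : n < N then tpair f (a ⟨n, h⟩) (y ⟨n, h⟩) else 0 with hT
  set d : ℕ → ℝ := fun n => ext a n - ext y n with hd
  have hT0 : ∀ n, 0 ≤ T n := by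
    intro n; simp only [hT]
    split
    · exact tpair_nonneg hm _ _
    · exact le_refl 0
  have hTa : Antitone T := by
    intro i j hij
    simp only [hT]
    by_cases hj : j < N
    · have hi : i < N := lt_of_le_of_lt hij hj
      rw [dif_pos hj, dif_pos hi]
      exact tpair_mono hf hm (ha (by exact hij : (⟨i, hi⟩ : Fin N) ≤ ⟨j, hj⟩))
        (hy (by exact hij : (⟨i, hi⟩ : Fin N) ≤ ⟨j, hj⟩))
    · rw [dif_neg hj]
      exact hT0 i
  have hdS : ∀ n, ∑ i ∈ Finset.range n, d i ≤ 0 := by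
    intro n
    have : ∑ i ∈ Finset.range n, d i = pSum a n - pSum y n := by
      rw [pSum_eq_range, pSum_eq_range, ← Finset.sum_sub_distrib]
    rw [this]
    linarith [h n]
  have key : ∀ n, ext (fun i => f (a i)) n - ext (fun i => f (y i)) n ≤ T n * d n := by
    intro n
    simp only [hT, hd, ext]
    by_cases hn : n < N
    · simp only [dif_pos hn]
      exact tpair_ineq _ _
    · simp only [dif_neg hn]
      simp
  have h1 : pSum (fun i => f (a i)) k - pSum (fun i => f (y i)) k ≤ 0 := by
    rw [pSum_eq_range, pSum_eq_range, ← Finset.sum_sub_distrib]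
    calc ∑ n ∈ Finset.range k, (ext (fun i => f (a i)) n - ext (fun i => f (y i)) n)
        ≤ ∑ n ∈ Finset.range k, T n * d n := Finset.sum_le_sum fun n _ => key n
    _ ≤ 0 := abel_nonpos T d hTa hT0 hdS k
  linarith



variable {N : ℕ}

lemma gauge_zero (ρ : SymmGauge N) : ρ.toFun 0 = 0 := by
  have h := ρ.homog 0 0
  simpa using h

/-- Ky Fan dominance: a symmetric gauge is monotone with respect to weak majorization
(for an antitone nonnegative first argument). -/
lemma gauge_dominates (ρ : SymmGauge N) (x Y : Fin N → ℝ)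
    (hx : Antitone x) (hx0 : ∀ i, 0 ≤ x i)
    (h : ∀ k, pSum x k ≤ pSum Y k) : ρ.toFun x ≤ ρ.toFun Y := by
  by_cases hxz : x = 0
  · rw [hxz, gauge_zero]
    exact ρ.nonneg Y
  -- Hahn–Banach: a linear functional g with g x = ρ x and g ≤ ρ.
  obtain ⟨g, hg1, hg2⟩ :
      ∃ g : (Fin N → ℝ) →ₗ[ℝ] ℝ,
        (∀ v : (LinearPMap.mkSpanSingleton (K := ℝ) x (ρ.toFun x) hxz).domain,
          g v = (LinearPMap.mkSpanSingleton (K := ℝ) x (ρ.toFun x) hxz) v) ∧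
        ∀ v, g v ≤ ρ.toFun v := by
    refine exists_extension_of_le_sublinear _ ρ.toFun
      (fun c hc v => by rw [ρ.homog, abs_of_pos hc]) ρ.triangle ?_
    rintro ⟨v, hv⟩
    rcases Submodule.mem_span_singleton.1 hv with ⟨t, rfl⟩
    have happ : (LinearPMap.mkSpanSingleton (K := ℝ) x (ρ.toFun x) hxz) ⟨t • x, hv⟩
        = t • ρ.toFun x := by
      exact LinearPMap.mkSpanSingleton'_apply _ _ _ t _
    rw [happ]
    rcases le_or_gt 0 t with ht | ht
    · rw [ρ.homog, abs_of_nonneg ht, smul_eq_mul]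
    · have h1 : t • ρ.toFun x ≤ 0 :=
        mul_nonpos_of_nonpos_of_nonneg ht.le (ρ.nonneg x)
      exact h1.trans (ρ.nonneg _)
  have hgx : g x = ρ.toFun x := by
    have := hg1 ⟨x, Submodule.mem_span_singleton_self x⟩
    rw [this, LinearPMap.mkSpanSingleton_apply]
  -- coordinates of g
  set e : Fin N → (Fin N → ℝ) := fun j => fun k => if j = k then 1 else 0 with he
  set z : Fin N → ℝ := fun j => g (e j) with hz
  have hgv : ∀ v : Fin N → ℝ, g v = ∑ j, v j * z j := by
    intro v
    conv_lhs => rw [pi_eq_sum_univ v]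
    rw [map_sum]
    exact Finset.sum_congr rfl fun j _ => by rw [_root_.map_smul, smul_eq_mul]
  -- sort |z| decreasingly
  set σ : Equiv.Perm (Fin N) := Tuple.sort (fun i => |z i|) with hσ
  set π : Equiv.Perm (Fin N) := Fin.revPerm.trans σ with hπ
  set w : Fin N → ℝ := fun i => |z (π i)| with hw
  have hwmono : Antitone w := by
    intro i j hij
    have hmono := Tuple.monotone_sort (fun i => |z i|)
    have : (Fin.revPerm : Equiv.Perm (Fin N)) j ≤ Fin.revPerm i := by
      simpa [Fin.revPerm] using Fin.rev_le_rev.2 hij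
    exact hmono this
  have hw0 : ∀ i, 0 ≤ w i := fun i => abs_nonneg _
  -- chain of inequalities
  have step1 : ρ.toFun x ≤ ∑ j, |z j| * x j := by
    rw [← hgx, hgv]
    refine Finset.sum_le_sum fun j _ => ?_
    calc x j * z j = z j * x j := mul_comm _ _
    _ ≤ |z j| * x j := mul_le_mul_of_nonneg_right (le_abs_self _) (hx0 j)
  have step2 : ∑ j, |z j| * x j = ∑ j, w j * x (π j) := by
    rw [← Equiv.sum_comp π (fun j => |z j| * x j)]
  have step3 : ∑ j, w j * x (π j) ≤ ∑ j, w j * x j := by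
    have hmono : Monovary w x := by
      intro i j hij
      by_contra hc
      push_neg at hc
      have : j ≤ i := by
        by_contra hc'
        push_neg at hc'
        exact absurd (hx hc'.le) (not_le.2 hij)
      exact absurd (hwmono this) (not_le.2 hc)
    simpa [smul_eq_mul] using hmono.sum_smul_comp_perm_le_sum_smul (σ := π)
  have step4 : ∑ j, w j * x j ≤ ∑ j, w j * Y j := by
    have hd : ∀ n, ∑ i ∈ Finset.range n, (ext x i - ext Y i) ≤ 0 := by
      intro n
      have : ∑ i ∈ Finset.range n, (ext x i - ext Y i) = pSum x n - pSum Y n := by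
        rw [pSum_eq_range, pSum_eq_range, ← Finset.sum_sub_distrib]
      rw [this]; linarith [h n]
    have hTa : Antitone (ext w) := by
      intro i j hij
      unfold ext
      by_cases hj : j < N
      · have hi : i < N := lt_of_le_of_lt hij hj
        rw [dif_pos hj, dif_pos hi]
        exact hwmono (by exact hij : (⟨i, hi⟩ : Fin N) ≤ ⟨j, hj⟩)
      · rw [dif_neg hj]
        split
        · exact hw0 _
        · exact le_refl 0
    have hT0 : ∀ n, 0 ≤ ext w n := by
      intro n; unfold ext; split
      · exact hw0 _
      · exact le_refl 0
    have habel := abel_nonpos (ext w) (fun n => ext x n - ext Y n) hTa hT0 hd N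
    have hsum : ∑ j, (w j * x j - w j * Y j)
        = ∑ n ∈ Finset.range N, ext w n * (ext x n - ext Y n) := by
      rw [sum_univ_eq_range (fun j => w j * x j - w j * Y j)]
      refine Finset.sum_congr rfl fun n hn => ?_
      have hn' : n < N := Finset.mem_range.1 hn
      unfold ext
      simp only [dif_pos hn']
      ring
    have : ∑ j, (w j * x j - w j * Y j) ≤ 0 := by rw [hsum]; exact habel
    have h2 : ∑ j, (w j * x j - w j * Y j) = ∑ j, w j * x j - ∑ j, w j * Y j :=
      Finset.sum_sub_distrib _ _
    linarith [h2 ▸ this]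
  have step5 : ∑ j, w j * Y j ≤ ρ.toFun Y := by
    set s : Fin N → ℝ := fun j => if z j < 0 then -1 else 1 with hs
    set Y' : Fin N → ℝ := fun j => s j * Y (π.symm j) with hY'
    have habs : ∀ j, |s j| = 1 := by
      intro j; simp only [hs]; split <;> simp
    have hzs : ∀ j, z j * s j = |z j| := by
      intro j; simp only [hs]
      split
      · rename_i hj; rw [abs_of_neg hj]; ring
      · rename_i hj; rw [abs_of_nonneg (not_lt.1 hj)]; ring
    have h1 : ∑ j, w j * Y j = ∑ j, |z j| * Y (π.symm j) := by
      rw [← Equiv.sum_comp π (fun j => |z j| * Y (π.symm j))]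
      refine Finset.sum_congr rfl fun j _ => ?_
      rw [Equiv.symm_apply_apply]
    have h2 : ∑ j, |z j| * Y (π.symm j) = g Y' := by
      rw [hgv]
      refine Finset.sum_congr rfl fun j _ => ?_
      simp only [hY']
      calc |z j| * Y (π.symm j) = (z j * s j) * Y (π.symm j) := by rw [hzs]
      _ = s j * Y (π.symm j) * z j := by ring
    have h3 : ρ.toFun Y' = ρ.toFun Y := by
      rw [← ρ.abs_invariant Y']
      have : (fun i => |Y' i|) = (fun i => |Y i|) ∘ π.symm := by
        funext i
        simp only [hY', Function.comp_apply, abs_mul, habs i, one_mul]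
      rw [this, ρ.perm_invariant π.symm, ρ.abs_invariant]
    rw [h1, h2, ← h3]
    exact hg2 Y'
  linarith



variable {N : ℕ}

lemma card_filter_lt {k : ℕ} (hkN : k ≤ N) :
    (Finset.univ.filter (fun i : Fin N => (i : ℕ) < k)).card = k := by
  have himg : (Finset.univ.filter (fun i : Fin N => (i : ℕ) < k)).image Fin.val
      = Finset.range k := by
    ext m
    simp only [Finset.mem_image, Finset.mem_filter, Finset.mem_univ, true_and,
      Finset.mem_range]
    constructor
    · rintro ⟨i, hi, rfl⟩; exact hi
    · intro hm
      exact ⟨⟨m, lt_of_lt_of_le hm hkN⟩, hm, rfl⟩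
  calc (Finset.univ.filter (fun i : Fin N => (i : ℕ) < k)).card
      = ((Finset.univ.filter (fun i : Fin N => (i : ℕ) < k)).image Fin.val).card :=
        (Finset.card_image_of_injective _ Fin.val_injective).symm
  _ = k := by rw [himg, Finset.card_range]

/-- Sum over any set of at most `k` entries of an antitone nonnegative vector is at most
the sum of the first `k` entries. -/
lemma sum_le_sum_first {k : ℕ} (hkN : k ≤ N) (v : Fin N → ℝ) (hv : Antitone v)
    (hv0 : ∀ i, 0 ≤ v i) (S : Finset (Fin N)) (hS : S.card ≤ k) :
    ∑ i ∈ S, v i ≤ pSum v k := by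
  set T := Finset.univ.filter (fun i : Fin N => (i : ℕ) < k) with hT
  have hTcard : T.card = k := card_filter_lt hkN
  have hsplitS : ∑ i ∈ S ∩ T, v i + ∑ i ∈ S \ T, v i = ∑ i ∈ S, v i :=
    Finset.sum_inter_add_sum_sdiff S T v
  have hsplitT : ∑ i ∈ T ∩ S, v i + ∑ i ∈ T \ S, v i = ∑ i ∈ T, v i :=
    Finset.sum_inter_add_sum_sdiff T S v
  have hcard : (S \ T).card ≤ (T \ S).card := by
    have h1 : (S \ T).card + (S ∩ T).card = S.card := Finset.card_sdiff_add_card_inter S T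
    have h2 : (T \ S).card + (T ∩ S).card = T.card := Finset.card_sdiff_add_card_inter T S
    have h3 : (S ∩ T).card = (T ∩ S).card := by rw [Finset.inter_comm]
    omega
  obtain ⟨U, hUsub, hUcard⟩ := Finset.exists_subset_card_eq hcard
  have e : (S \ T : Finset (Fin N)) ≃ (U : Finset (Fin N)) :=
    Finset.equivOfCardEq hUcard.symm
  have hdiff : ∑ i ∈ S \ T, v i ≤ ∑ i ∈ T \ S, v i := by
    have h1 : ∑ i ∈ S \ T, v i = ∑ i : (S \ T : Finset (Fin N)), v i :=
      (Finset.sum_coe_sort _ _).symm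
    have h2 : ∀ i : (S \ T : Finset (Fin N)), v (i : Fin N) ≤ v ((e i : Fin N)) := by
      intro i
      have hi : ¬ ((i : Fin N) : ℕ) < k := by
        have := (Finset.mem_sdiff.1 i.2).2
        simpa [hT] using this
      have hei : ((e i : Fin N) : ℕ) < k := by
        have := hUsub (e i).2
        have := (Finset.mem_sdiff.1 this).1
        simpa [hT] using this
      exact hv (by omega : (e i : Fin N) ≤ (i : Fin N))
    have h3 : ∑ i : (S \ T : Finset (Fin N)), v ((e i : Fin N)) = ∑ j ∈ U, v j := by
      rw [← Finset.sum_coe_sort U (fun j => v j)]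
      exact Equiv.sum_comp e (fun j : (U : Finset (Fin N)) => v (j : Fin N))
    calc ∑ i ∈ S \ T, v i = ∑ i : (S \ T : Finset (Fin N)), v (i : Fin N) := h1
    _ ≤ ∑ i : (S \ T : Finset (Fin N)), v ((e i : Fin N)) :=
        Finset.sum_le_sum fun i _ => h2 i
    _ = ∑ j ∈ U, v j := h3
    _ ≤ ∑ i ∈ T \ S, v i :=
        Finset.sum_le_sum_of_subset_of_nonneg hUsub fun i _ _ => hv0 i
  have hinter : ∑ i ∈ S ∩ T, v i = ∑ i ∈ T ∩ S, v i := by rw [Finset.inter_comm]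
  have : ∑ i ∈ S, v i ≤ ∑ i ∈ T, v i := by linarith
  exact this

/-- Underlying function of the Ky Fan `k`-gauge. -/
noncomputable def kfFun (N k : ℕ) (x : Fin N → ℝ) : ℝ :=
  Finset.sup' (Finset.univ.powerset) ⟨∅, by simp⟩
    (fun S => if S.card ≤ k then ∑ i ∈ S, |x i| else 0)

lemma kfFun_nonneg (k : ℕ) (x : Fin N → ℝ) : 0 ≤ kfFun N k x := by
  refine le_trans (le_of_eq ?_) (Finset.le_sup' _ (Finset.mem_powerset.2 (Finset.empty_subset _)))
  simp

lemma le_kfFun {k : ℕ} (x : Fin N → ℝ) (S : Finset (Fin N)) (hS : S.card ≤ k) :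
    ∑ i ∈ S, |x i| ≤ kfFun N k x :=
  le_trans (le_of_eq (by rw [if_pos hS])) (Finset.le_sup' _ (Finset.mem_powerset.2 (Finset.subset_univ S)))

lemma kfFun_le {k : ℕ} {x : Fin N → ℝ} {r : ℝ} (hr : 0 ≤ r)
    (h : ∀ S : Finset (Fin N), S.card ≤ k → ∑ i ∈ S, |x i| ≤ r) : kfFun N k x ≤ r := by
  refine Finset.sup'_le _ _ fun S hS => ?_
  split
  · exact h S (by assumption)
  · exact hr

/-- The Ky Fan `k`-gauge. -/
noncomputable def kyFan (N k : ℕ) (hk1 : 1 ≤ k) : SymmGauge N where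
  toFun := kfFun N k
  nonneg := kfFun_nonneg k
  triangle x y := by
    refine kfFun_le (add_nonneg (kfFun_nonneg k x) (kfFun_nonneg k y)) fun S hS => ?_
    calc ∑ i ∈ S, |x i + y i| ≤ ∑ i ∈ S, (|x i| + |y i|) :=
          Finset.sum_le_sum fun i _ => abs_add_le _ _
    _ = ∑ i ∈ S, |x i| + ∑ i ∈ S, |y i| := Finset.sum_add_distrib
    _ ≤ _ + _ := add_le_add (le_kfFun x S hS) (le_kfFun y S hS)
  homog c x := by
    refine le_antisymm ?_ ?_
    · refine kfFun_le (mul_nonneg (abs_nonneg c) (kfFun_nonneg k x)) fun S hS => ?_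
      have : ∑ i ∈ S, |(c • x) i| = |c| * ∑ i ∈ S, |x i| := by
        rw [Finset.mul_sum]
        exact Finset.sum_congr rfl fun i _ => by simp [abs_mul]
      rw [this]
      exact mul_le_mul_of_nonneg_left (le_kfFun x S hS) (abs_nonneg c)
    · obtain ⟨S₀, hS₀mem, hS₀⟩ : ∃ S₀ ∈ (Finset.univ : Finset (Fin N)).powerset,
          kfFun N k x = (if S₀.card ≤ k then ∑ i ∈ S₀, |x i| else 0) := by
        unfold kfFun
        obtain ⟨S₀, h1, h2⟩ := Finset.exists_mem_eq_sup'
          (⟨∅, by simp⟩ : ((Finset.univ : Finset (Fin N)).powerset).Nonempty)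
          (fun S : Finset (Fin N) => if S.card ≤ k then ∑ i ∈ S, |x i| else 0)
        exact ⟨S₀, h1, h2⟩
      rw [hS₀]
      by_cases hc : S₀.card ≤ k
      · rw [if_pos hc]
        have : |c| * ∑ i ∈ S₀, |x i| = ∑ i ∈ S₀, |(c • x) i| := by
          rw [Finset.mul_sum]
          exact Finset.sum_congr rfl fun i _ => by simp [abs_mul]
        rw [this]
        exact le_kfFun (c • x) S₀ hc
      · rw [if_neg hc, mul_zero]
        exact kfFun_nonneg k _
  pos_of_ne_zero x hx := by
    obtain ⟨i, hi⟩ := Function.ne_iff.1 hx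
    have h1 : |x i| ≤ kfFun N k x := by
      have := le_kfFun x {i} (by simpa using hk1)
      simpa using this
    have : (0:ℝ) < |x i| := abs_pos.2 hi
    linarith
  perm_invariant σ x := by
    have key : ∀ (σ : Equiv.Perm (Fin N)) (x : Fin N → ℝ),
        kfFun N k (x ∘ σ) ≤ kfFun N k x := by
      intro σ x
      refine kfFun_le (kfFun_nonneg k x) fun S hS => ?_
      have himg : ∑ j ∈ S.image σ, |x j| = ∑ i ∈ S, |x (σ i)| :=
        Finset.sum_image (fun i _ j _ h => σ.injective h)
      rw [show ∑ i ∈ S, |(x ∘ σ) i| = ∑ i ∈ S, |x (σ i)| from rfl, ← himg]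
      exact le_kfFun x _ (le_trans (Finset.card_image_le) hS)
    refine le_antisymm (key σ x) ?_
    have h2 := key σ⁻¹ (x ∘ σ)
    have h3 : (x ∘ σ) ∘ (σ⁻¹ : Equiv.Perm (Fin N)) = x := by
      funext i; simp
    rwa [h3] at h2
  abs_invariant x := by
    unfold kfFun
    congr 1
    funext S
    congr 1
    exact Finset.sum_congr rfl fun i _ => abs_abs _



variable {N : ℕ}

/-- Value of the Ky Fan gauge on an antitone nonnegative vector: top-`k` partial sum. -/
lemma kyFan_val {k : ℕ} (hk1 : 1 ≤ k) (hkN : k ≤ N) (v : Fin N → ℝ)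
    (hv : Antitone v) (hv0 : ∀ i, 0 ≤ v i) :
    (kyFan N k hk1).toFun v = pSum v k := by
  have hT : pSum v k = ∑ i ∈ Finset.univ.filter (fun i : Fin N => (i : ℕ) < k), |v i| := by
    exact Finset.sum_congr rfl fun i _ => (abs_of_nonneg (hv0 i)).symm
  refine le_antisymm ?_ ?_
  · refine kfFun_le ?_ fun S hS => ?_
    · unfold pSum
      exact Finset.sum_nonneg fun i _ => hv0 i
    · have : ∑ i ∈ S, |v i| = ∑ i ∈ S, v i :=
        Finset.sum_congr rfl fun i _ => abs_of_nonneg (hv0 i)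
      rw [this]
      exact sum_le_sum_first hkN v hv hv0 S hS
  · rw [hT]
    exact le_kfFun v _ (le_of_eq (card_filter_lt hkN))

lemma pSum_min (x : Fin N → ℝ) (k : ℕ) : pSum x k = pSum x (min k N) := by
  unfold pSum
  congr 1
  ext i
  simp only [Finset.mem_filter, Finset.mem_univ, true_and]
  have := i.isLt
  omega

lemma pSum_add_const (x : Fin N → ℝ) (c : ℝ) {k : ℕ} (hkN : k ≤ N) :
    pSum (fun i => x i + c) k = pSum x k + k * c := by
  unfold pSum
  rw [Finset.sum_add_distrib, Finset.sum_const, card_filter_lt hkN]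
  push_cast
  ring



variable {N : ℕ}

lemma gauge_sum_le (ρ : SymmGauge N) {ι : Type*} (s : Finset ι) (g : ι → Fin N → ℝ) :
    ρ.toFun (∑ i ∈ s, g i) ≤ ∑ i ∈ s, ρ.toFun (g i) := by
  classical
  induction s using Finset.induction with
  | empty => simp [gauge_zero]
  | insert _ _ h ih =>
    rw [Finset.sum_insert h, Finset.sum_insert h]
    exact (ρ.triangle _ _).trans (by linarith)

lemma gauge_le_norm (ρ : SymmGauge N) (v : Fin N → ℝ) :
    ρ.toFun v ≤ (∑ i, ρ.toFun (fun k => if i = k then 1 else 0)) * ‖v‖ := by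
  calc ρ.toFun v
      = ρ.toFun (∑ i, v i • fun k => if i = k then (1:ℝ) else 0) := by
        rw [← pi_eq_sum_univ v]
  _ ≤ ∑ i, ρ.toFun (v i • fun k => if i = k then (1:ℝ) else 0) := gauge_sum_le ρ _ _
  _ = ∑ i, |v i| * ρ.toFun (fun k => if i = k then 1 else 0) := by
        exact Finset.sum_congr rfl fun i _ => ρ.homog _ _
  _ ≤ ∑ i, ‖v‖ * ρ.toFun (fun k => if i = k then 1 else 0) := by
        refine Finset.sum_le_sum fun i _ => ?_
        exact mul_le_mul_of_nonneg_right (by simpa using norm_le_pi_norm v i) (ρ.nonneg _)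
  _ = (∑ i, ρ.toFun (fun k => if i = k then 1 else 0)) * ‖v‖ := by
        rw [← Finset.mul_sum, mul_comm]

lemma gauge_sub_le (ρ : SymmGauge N) (u v : Fin N → ℝ) :
    ρ.toFun u - ρ.toFun v ≤ ρ.toFun (u - v) := by
  have h := ρ.triangle (u - v) v
  rw [sub_add_cancel] at h
  linarith

lemma gauge_continuous (ρ : SymmGauge N) : Continuous ρ.toFun := by
  set K : ℝ := ∑ i, ρ.toFun (fun k => if i = k then 1 else 0) with hK
  have hK0 : 0 ≤ K := Finset.sum_nonneg fun i _ => ρ.nonneg _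
  refine (LipschitzWith.of_dist_le_mul (K := K.toNNReal) (f := ρ.toFun) ?_).continuous
  intro u v
  rw [Real.dist_eq, dist_eq_norm, Real.coe_toNNReal K hK0]
  have h1 : ρ.toFun u - ρ.toFun v ≤ ρ.toFun (u - v) := gauge_sub_le ρ u v
  have h2 : ρ.toFun v - ρ.toFun u ≤ ρ.toFun (u - v) := by
    have h3 := gauge_sub_le ρ v u
    have h4 : ρ.toFun (v - u) = ρ.toFun (u - v) := by
      have := ρ.homog (-1) (u - v)
      simpa [neg_sub] using this
    linarith
  have h5 : ρ.toFun (u - v) ≤ K * ‖u - v‖ := gauge_le_norm ρ (u - v)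
  rw [abs_sub_le_iff]
  constructor <;> linarith

lemma gauge_convexOn (ρ : SymmGauge N) : ConvexOn ℝ Set.univ ρ.toFun := by
  refine ⟨convex_univ, fun u _ v _ s t hs ht hst => ?_⟩
  calc ρ.toFun (s • u + t • v) ≤ ρ.toFun (s • u) + ρ.toFun (t • v) := ρ.triangle _ _
  _ = s * ρ.toFun u + t * ρ.toFun v := by
      rw [ρ.homog, ρ.homog, abs_of_nonneg hs, abs_of_nonneg ht]
  _ = s • ρ.toFun u + t • ρ.toFun v := by simp [smul_eq_mul]


end WMaux

open WMaux

/-- weak-majorization norm characterization with integral average.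
Here `N = m·p`, `a = λ⃗(C)` is the nonincreasing T-eigenvalue vector of the
symmetric T-product tensor `C`, and `b τ = λ⃗(D_τ)` that of `D_τ`; for a
nondecreasing convex `f ≥ 0`, `‖f(C)‖_ρ = ρ(f ∘ λ⃗(C))` for every unitarily
invariant norm given by a symmetric gauge function `ρ`.  The statement:
`λ⃗(C) ≺_w ∫ λ⃗(D_τ) dν(τ)` iff for every such `f` and every `ρ`,
`‖f(C)‖_ρ ≤ ∫ ‖f(D_τ)‖_ρ dν(τ)`. -/
theorem weak_majorization_integral_average_iff {N : ℕ} {Ω : Type*}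
    [MetricSpace Ω] [SigmaCompactSpace Ω] [MeasurableSpace Ω] [BorelSpace Ω]
    (ν : Measure Ω) [IsProbabilityMeasure ν]
    (a : Fin N → ℝ) (ha : Antitone a)
    (b : Ω → Fin N → ℝ) (hb : ∀ τ, Antitone (b τ))
    (hbc : Continuous b) (hbd : ∃ M, ∀ τ i, |b τ i| ≤ M) :
    ((∀ k, pSum a k ≤ pSum (fun i => ∫ τ, b τ i ∂ν) k) ↔
      (∀ f : ℝ → ℝ, Monotone f → ConvexOn ℝ Set.univ f → (∀ t, 0 ≤ f t) →
        ∀ ρ : SymmGauge N,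
          ρ.toFun (fun i => f (a i)) ≤ ∫ τ, ρ.toFun (fun i => f (b τ i)) ∂ν)) := by
  obtain ⟨M, hM⟩ := hbd
  have hbi : ∀ i, Integrable (fun τ => b τ i) ν := by
    intro i
    refine Integrable.mono' (integrable_const M)
      (((continuous_apply i).comp hbc).aestronglyMeasurable) ?_
    exact Filter.Eventually.of_forall fun τ => by simpa using hM τ i
  constructor
  · -- forward direction
    intro H f hfm hfc hf0 ρ
    have hcont : Continuous f := hfc.locallyLipschitz.continuous
    have hfb_int : ∀ i, Integrable (fun τ => f (b τ i)) ν := by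
      intro i
      refine Integrable.mono' (integrable_const (f M))
        ((hcont.comp ((continuous_apply i).comp hbc)).aestronglyMeasurable) ?_
      refine Filter.Eventually.of_forall fun τ => ?_
      rw [Real.norm_eq_abs, abs_of_nonneg (hf0 _)]
      exact hfm ((le_abs_self _).trans (hM τ i))
    have hymono : Antitone (fun i => ∫ τ, b τ i ∂ν) := fun i j hij =>
      integral_mono (hbi j) (hbi i) fun τ => hb τ hij
    have hjen : ∀ i, f (∫ τ, b τ i ∂ν) ≤ ∫ τ, f (b τ i) ∂ν := by
      intro i
      have h1 := hfc.map_average_le hcont.continuousOn isClosed_univ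
        (Filter.Eventually.of_forall fun τ => Set.mem_univ _) (hbi i) (hfb_int i)
      simpa [average_eq_integral] using h1
    have hwm : ∀ k, pSum (fun i => f (a i)) k ≤ pSum (fun i => ∫ τ, f (b τ i) ∂ν) k := by
      intro k
      refine (pSum_comp_le hfc hfm a _ ha hymono H k).trans ?_
      unfold pSum
      exact Finset.sum_le_sum fun i _ => hjen i
    have hdom := gauge_dominates ρ (fun i => f (a i)) (fun i => ∫ τ, f (b τ i) ∂ν)
      (hfm.comp_antitone ha) (fun i => hf0 _) hwm
    refine hdom.trans ?_
    -- vector Jensen for ρ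
    have hFc : Continuous (fun τ => (fun i => f (b τ i))) :=
      continuous_pi fun i => hcont.comp ((continuous_apply i).comp hbc)
    have hFb : ∀ τ, ‖(fun i => f (b τ i))‖ ≤ f M := by
      intro τ
      rw [pi_norm_le_iff_of_nonneg (hf0 M)]
      intro i
      rw [Real.norm_eq_abs, abs_of_nonneg (hf0 _)]
      exact hfm ((le_abs_self _).trans (hM τ i))
    have hFint : Integrable (fun τ => (fun i => f (b τ i))) ν :=
      Integrable.mono' (integrable_const (f M)) hFc.aestronglyMeasurable
        (Filter.Eventually.of_forall hFb)
    have hρint : Integrable (fun τ => ρ.toFun (fun i => f (b τ i))) ν := by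
      refine Integrable.mono' (integrable_const
        ((∑ i, ρ.toFun (fun k => if i = k then 1 else 0)) * f M))
        (((gauge_continuous ρ).comp hFc).aestronglyMeasurable) ?_
      refine Filter.Eventually.of_forall fun τ => ?_
      rw [Real.norm_eq_abs, abs_of_nonneg (ρ.nonneg _)]
      refine (gauge_le_norm ρ _).trans ?_
      exact mul_le_mul_of_nonneg_left (hFb τ)
        (Finset.sum_nonneg fun i _ => ρ.nonneg _)
    have hvj := (gauge_convexOn ρ).map_average_le (gauge_continuous ρ).continuousOn
      isClosed_univ (Filter.Eventually.of_forall fun τ => Set.mem_univ _) hFint hρint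
    rw [average_eq_integral, average_eq_integral] at hvj
    have hiz : (∫ τ, (fun i => f (b τ i)) ∂ν) = (fun i => ∫ τ, f (b τ i) ∂ν) := by
      funext i
      have h := ContinuousLinearMap.integral_comp_comm
        (ContinuousLinearMap.proj (R := ℝ) (φ := fun _ : Fin N => ℝ) i) hFint
      simpa using h.symm
    rw [hiz] at hvj
    exact hvj
  · -- backward direction
    intro H k
    rw [pSum_min a k, pSum_min _ k]
    set k' := min k N with hk'
    rcases Nat.eq_zero_or_pos k' with hk0 | hkpos
    · rw [hk0]
      unfold pSum
      simp
    · have hk'N : k' ≤ N := min_le_right k N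
      set c : ℝ := max M 0 + ∑ i, |a i| with hc
      have hsum0 : (0:ℝ) ≤ ∑ j, |a j| := Finset.sum_nonneg fun j _ => abs_nonneg _
      have hca : ∀ i, 0 ≤ a i + c := by
        intro i
        have h1 : |a i| ≤ ∑ j, |a j| :=
          Finset.single_le_sum (fun j _ => abs_nonneg (a j)) (Finset.mem_univ i)
        have h2 := neg_abs_le (a i)
        have h3 : (0:ℝ) ≤ max M 0 := le_max_right M 0
        simp only [hc]
        linarith
      have hcb : ∀ τ i, 0 ≤ b τ i + c := by
        intro τ i
        have h1 := hM τ i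
        have h2 := neg_abs_le (b τ i)
        have h3 : M ≤ max M 0 := le_max_left M 0
        simp only [hc]
        linarith
      have hfm : Monotone (fun t : ℝ => max (t + c) 0) :=
        (monotone_id.add_const c).max monotone_const
      have hfc : ConvexOn ℝ Set.univ (fun t : ℝ => max (t + c) 0) :=
        ((convexOn_id convex_univ).add (convexOn_const c convex_univ)).sup
          (convexOn_const 0 convex_univ)
      have hf0 : ∀ t : ℝ, 0 ≤ max (t + c) 0 := fun t => le_max_right _ _
      have hkey := H (fun t => max (t + c) 0) hfm hfc hf0 (kyFan N k' hkpos)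
      have hfa : (fun i => max (a i + c) 0) = fun i => a i + c :=
        funext fun i => max_eq_left (hca i)
      have hL : (kyFan N k' hkpos).toFun (fun i => max (a i + c) 0) = pSum a k' + k' * c := by
        rw [hfa, kyFan_val hkpos hk'N _ (fun i j hij => by
          have := ha hij; simpa using this) hca, pSum_add_const a c hk'N]
      have hR : ∀ τ, (kyFan N k' hkpos).toFun (fun i => max (b τ i + c) 0)
          = pSum (b τ) k' + k' * c := by
        intro τ
        have hfb' : (fun i => max (b τ i + c) 0) = fun i => b τ i + c :=
          funext fun i => max_eq_left (hcb τ i)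
        rw [hfb', kyFan_val hkpos hk'N _ (fun i j hij => by
          have := hb τ hij; simpa using this) (hcb τ), pSum_add_const _ c hk'N]
      have hRint : ∫ τ, (kyFan N k' hkpos).toFun (fun i => max (b τ i + c) 0) ∂ν
          = pSum (fun i => ∫ τ, b τ i ∂ν) k' + k' * c := by
        rw [show (fun τ => (kyFan N k' hkpos).toFun (fun i => max (b τ i + c) 0))
          = fun τ => pSum (b τ) k' + k' * c from funext hR]
        have hint : Integrable (fun τ => pSum (b τ) k') ν := by
          unfold pSum
          exact integrable_finset_sum _ fun i _ => hbi i
        rw [integral_add hint (integrable_const _), integral_const]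
        congr 1
        · unfold pSum
          rw [integral_finset_sum _ fun i _ => hbi i]
        · simp
      rw [hL, hRint] at hkey
      linarith
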